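/- Let E be a finite-dimensional real normed space, A : E → ℝ convex and superlinear, B its Fenchel transform. For every y ∈ E*, the Legendre transform L(y) = { x ∈ E : A(x) + B(y) = ⟨y,x⟩ } is a compact convex subset of E. -/

import Mathlib

/-- The Legendre transform of a dual point is compact and convex. -/
theorem stmt_3 {E : Type*} [NormedAddCommGroup E] [NormedSpace ℝ E] [FiniteDimensional ℝ E]
    (A : E → ℝ) (hconv : ConvexOn ℝ Set.univ A)
    (hsup : ∀ C > (0:ℝ), ∃ R : ℝ, ∀ x : E, R ≤ ‖x‖ → C * ‖x‖ ≤ A x)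
    (y : E →L[ℝ] ℝ) :
    IsCompact {x : E | A x + (⨆ x' : E, (y x' - A x')) = y x} ∧
    Convex ℝ {x : E | A x + (⨆ x' : E, (y x' - A x')) = y x} := by
  have hAcont : Continuous A := by
    rw [← continuousOn_univ]
    exact hconv.continuousOn isOpen_univ
  set f : E → ℝ := fun x => y x - A x with hf
  have hfcont : Continuous f := y.continuous.sub hAcont
  obtain ⟨R, hR⟩ := hsup (‖y‖ + 1) (by positivity)
  -- f x ≤ -‖x‖ for ‖x‖ ≥ R
  have hfar : ∀ x : E, R ≤ ‖x‖ → f x ≤ -‖x‖ := by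
    intro x hx
    have h1 : y x ≤ ‖y‖ * ‖x‖ := (le_abs_self _).trans (y.le_opNorm x)
    have h2 := hR x hx
    simp only [hf]
    nlinarith
  obtain ⟨M, hM⟩ := ((isCompact_closedBall (0:E) |R|).image hfcont).bddAbove
  have hbdd : BddAbove (Set.range f) := by
    refine ⟨max M 0, ?_⟩
    rintro _ ⟨x, rfl⟩
    rcases le_or_gt R ‖x‖ with h | h
    · exact le_max_of_le_right (by linarith [hfar x h, norm_nonneg x])
    · refine le_max_of_le_left (hM ⟨x, ?_, rfl⟩)
      simp only [Metric.mem_closedBall, dist_zero_right]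
      exact (le_of_lt h).trans (le_abs_self R)
  set B : ℝ := ⨆ x' : E, (y x' - A x') with hB
  have hle : ∀ x : E, f x ≤ B := fun x => le_ciSup hbdd x
  have hB0 : -A 0 ≤ B := by
    have := hle 0
    simpa [hf] using this
  constructor
  · -- compact
    have hclosed : IsClosed {x : E | A x + B = y x} :=
      isClosed_eq (by continuity) y.continuous
    have hsub : {x : E | A x + B = y x} ⊆ Metric.closedBall (0:E) (max R |A 0|) := by
      intro x hx
      simp only [Set.mem_setOf_eq] at hx
      have hfx : f x = B := by simp only [hf]; linarith
      simp only [Metric.mem_closedBall, dist_zero_right]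
      rcases le_or_gt R ‖x‖ with h | h
      · have := hfar x h
        have : ‖x‖ ≤ A 0 := by linarith
        exact le_max_of_le_right (this.trans (le_abs_self _))
      · exact le_max_of_le_left h.le
    exact (isCompact_closedBall _ _).of_isClosed_subset hclosed hsub
  · -- convex
    intro a ha b hb s t hs ht hst
    simp only [Set.mem_setOf_eq] at ha hb ⊢
    have hA : A (s • a + t • b) ≤ s * A a + t * A b :=
      hconv.2 (Set.mem_univ a) (Set.mem_univ b) hs ht hst
    have hy : y (s • a + t • b) = s * y a + t * y b := by
      simp [map_add, map_smul, smul_eq_mul]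
    have hub : y (s • a + t • b) - A (s • a + t • b) ≤ B := hle _
    have hAa : A a = y a - B := by linarith
    have hAb : A b = y b - B := by linarith
    have key : A (s • a + t • b) ≤ y (s • a + t • b) - B := by
      rw [hAa, hAb] at hA
      calc A (s • a + t • b) ≤ s * (y a - B) + t * (y b - B) := hA
        _ = s * y a + t * y b - (s + t) * B := by ring
        _ = y (s • a + t • b) - B := by rw [hst, hy]; ring
    linarith
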